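/- Let α₂, σ > 0 and r, ρ > 1 be real numbers, and set f(x) = -α₂ x^r, g(x) = σ x^ρ for x > 0. Assume either (a) r + 1 > 2ρ, or (b) r + 1 = 2ρ and α₂/σ² > (1/8)(r + 2 + 1/r). Then there exist constants v > 2 and L₃ ≥ 0 such that for every step size h > 0 and all x, y > 0, (x - y)·(f_h(x) - f_h(y)) + ((v-1)/2)·(g_h(x) - g_h(y))² ≤ L₃ (x - y)², where f_h(x) = f(x)/(1 + h^{1/2} x^r) and g_h(x) = g(x)/(1 + h^{1/2} x^r). -/

import Mathlib

open MeasureTheory intervalIntegral Set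


lemma young_bound (C B a b : ℝ) (hC : 0 < C) (hB : 0 < B) (ha : 0 < a) (hab : a < b) :
    ∀ t : ℝ, 0 < t → C * t ^ a ≤ B * t ^ b + C * ((C / B) ^ ((b - a)⁻¹)) ^ a := by
  intro t ht
  set T0 : ℝ := (C / B) ^ ((b - a)⁻¹) with hT0
  have hT0pos : 0 < T0 := Real.rpow_pos_of_pos (div_pos hC hB) _
  rcases le_total t T0 with hle | hle
  · have h1 : t ^ a ≤ T0 ^ a := Real.rpow_le_rpow ht.le hle ha.le
    have h2 : 0 ≤ B * t ^ b := by positivity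
    nlinarith [mul_le_mul_of_nonneg_left h1 hC.le]
  · have h1 : T0 ^ (b - a) ≤ t ^ (b - a) := Real.rpow_le_rpow hT0pos.le hle (by linarith)
    have h2 : T0 ^ (b - a) = C / B := by
      rw [hT0, ← Real.rpow_mul (le_of_lt (div_pos hC hB)), inv_mul_cancel₀ (by linarith : b - a ≠ 0),
        Real.rpow_one]
    have h3 : t ^ b = t ^ a * t ^ (b - a) := by
      rw [← Real.rpow_add ht]; ring_nf
    have h4 : C / B ≤ t ^ (b - a) := h2 ▸ h1
    have h5 : C ≤ B * t ^ (b - a) := by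
      rw [div_le_iff₀ hB] at h4; linarith [h4]
    have h6 : 0 < t ^ a := Real.rpow_pos_of_pos ht a
    have h7 : 0 ≤ C * T0 ^ a := by positivity
    nlinarith [mul_le_mul_of_nonneg_left h5 h6.le]



lemma pointwise_bound (α₂ σ r ρ c L₃ u t : ℝ) (hσ : 0 < σ) (hρ : 1 < ρ)
    (hrρ : ρ < r) (hc : 0 < c) (hL : 0 ≤ L₃) (hu : 0 < u) (ht : 0 < t)
    (hpt : c * (σ ^ 2 * max ρ (r - ρ) ^ 2) * t ^ (2 * ρ - 2) ≤ α₂ * r * t ^ (r - 1) + L₃) :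
    -(α₂ * r * t ^ (r - 1)) / (1 + u * t ^ r) ^ 2
      + c * (σ * t ^ (ρ - 1) * (ρ + (ρ - r) * (u * t ^ r)) / (1 + u * t ^ r) ^ 2) ^ 2 ≤ L₃ := by
  set M : ℝ := max ρ (r - ρ) with hM
  have hMρ : ρ ≤ M := le_max_left _ _
  have hMr : r - ρ ≤ M := le_max_right _ _
  have hM0 : 0 < M := lt_of_lt_of_le (by linarith) hMρ
  set w : ℝ := u * t ^ r with hw
  have hw0 : 0 < w := by
    have := Real.rpow_pos_of_pos ht r; positivity
  set d : ℝ := 1 + w with hd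
  have hd1 : 1 ≤ d := by simp [hd]; positivity
  have hd0 : 0 < d := by linarith
  have hsq : (ρ + (ρ - r) * w) ^ 2 ≤ M ^ 2 * d ^ 2 := by
    have h1 : (ρ + (ρ - r) * w) ^ 2 ≤ (M * d) ^ 2 := by
      apply sq_le_sq'
      · nlinarith
      · nlinarith
    nlinarith [h1]
  have htp : t ^ (ρ - 1) * t ^ (ρ - 1) = t ^ (2 * ρ - 2) := by
    rw [← Real.rpow_add ht]; ring_nf
  have htr1 : 0 < t ^ (r - 1) := Real.rpow_pos_of_pos ht _
  have htρ : 0 < t ^ (ρ - 1) := Real.rpow_pos_of_pos ht _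
  have htρ2 : 0 < t ^ (2 * ρ - 2) := Real.rpow_pos_of_pos ht _
  have e1 : c * (σ * t ^ (ρ - 1) * (ρ + (ρ - r) * w) / d ^ 2) ^ 2
      = c * σ ^ 2 * t ^ (2 * ρ - 2) * ((ρ + (ρ - r) * w) ^ 2) / (d ^ 2) ^ 2 := by
    rw [div_pow, ← htp]; ring
  have e2 : c * σ ^ 2 * t ^ (2 * ρ - 2) * ((ρ + (ρ - r) * w) ^ 2) / (d ^ 2) ^ 2
      ≤ c * σ ^ 2 * t ^ (2 * ρ - 2) * (M ^ 2 * d ^ 2) / (d ^ 2) ^ 2 := by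
    gcongr
  have e3 : c * σ ^ 2 * t ^ (2 * ρ - 2) * (M ^ 2 * d ^ 2) / (d ^ 2) ^ 2
      = c * (σ ^ 2 * M ^ 2) * t ^ (2 * ρ - 2) / d ^ 2 := by
    field_simp
  have e4 : -(α₂ * r * t ^ (r - 1)) / d ^ 2 + c * (σ ^ 2 * M ^ 2) * t ^ (2 * ρ - 2) / d ^ 2
      = (c * (σ ^ 2 * M ^ 2) * t ^ (2 * ρ - 2) - α₂ * r * t ^ (r - 1)) / d ^ 2 := by
    ring
  have e5 : (c * (σ ^ 2 * M ^ 2) * t ^ (2 * ρ - 2) - α₂ * r * t ^ (r - 1)) / d ^ 2 ≤ L₃ := by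
    rw [div_le_iff₀ (by positivity)]
    have hd2 : (1:ℝ) ≤ d ^ 2 := by nlinarith
    have h1 : L₃ * 1 ≤ L₃ * d ^ 2 := mul_le_mul_of_nonneg_left hd2 hL
    linarith [hpt]
  calc -(α₂ * r * t ^ (r - 1)) / (1 + u * t ^ r) ^ 2
      + c * (σ * t ^ (ρ - 1) * (ρ + (ρ - r) * (u * t ^ r)) / (1 + u * t ^ r) ^ 2) ^ 2
      = -(α₂ * r * t ^ (r - 1)) / d ^ 2
        + c * σ ^ 2 * t ^ (2 * ρ - 2) * ((ρ + (ρ - r) * w) ^ 2) / (d ^ 2) ^ 2 := by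
        rw [← e1]
    _ ≤ -(α₂ * r * t ^ (r - 1)) / d ^ 2
        + c * σ ^ 2 * t ^ (2 * ρ - 2) * (M ^ 2 * d ^ 2) / (d ^ 2) ^ 2 := by linarith [e2]
    _ = (c * (σ ^ 2 * M ^ 2) * t ^ (2 * ρ - 2) - α₂ * r * t ^ (r - 1)) / d ^ 2 := by
        rw [e3, ← e4]
    _ ≤ L₃ := e5


lemma core (α₂ σ r ρ : ℝ) (hα₂ : 0 < α₂) (hσ : 0 < σ) (hr : 1 < r) (hρ : 1 < ρ)
    (hrρ : ρ < r) (c L₃ : ℝ) (hc : 0 < c) (hL : 0 ≤ L₃)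
    (hpt : ∀ t : ℝ, 0 < t →
      c * (σ ^ 2 * max ρ (r - ρ) ^ 2) * t ^ (2 * ρ - 2) ≤ α₂ * r * t ^ (r - 1) + L₃)
    (u : ℝ) (hu : 0 < u) (x y : ℝ) (hy : 0 < y) (hyx : y ≤ x) :
    (x - y) * ((-α₂ * x ^ r) / (1 + u * x ^ r) - (-α₂ * y ^ r) / (1 + u * y ^ r))
      + c * ((σ * x ^ ρ) / (1 + u * x ^ r) - (σ * y ^ ρ) / (1 + u * y ^ r)) ^ 2
      ≤ L₃ * (x - y) ^ 2 := by
  have hx : 0 < x := lt_of_lt_of_le hy hyx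
  rcases eq_or_lt_of_le hyx with heq | hlt
  · subst heq
    simp
  have hxy : 0 < x - y := by linarith
  -- denominators positive
  have hden : ∀ t : ℝ, 0 < t → 0 < 1 + u * t ^ r := by
    intro t ht
    have := Real.rpow_pos_of_pos ht r
    positivity
  have hIcc : ∀ t ∈ Icc y x, 0 < t := fun t htt => lt_of_lt_of_le hy htt.1
  set F' : ℝ → ℝ := fun t => -(α₂ * r * t ^ (r - 1)) / (1 + u * t ^ r) ^ 2 with hF'def
  set G' : ℝ → ℝ := fun t => σ * t ^ (ρ - 1) * (ρ + (ρ - r) * (u * t ^ r)) / (1 + u * t ^ r) ^ 2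
    with hG'def
  -- derivative facts
  have hrpow : ∀ t : ℝ, 0 < t → HasDerivAt (fun s : ℝ => s ^ r) (r * t ^ (r - 1)) t :=
    fun t ht => Real.hasDerivAt_rpow_const (Or.inl ht.ne')
  have hrpowρ : ∀ t : ℝ, 0 < t → HasDerivAt (fun s : ℝ => s ^ ρ) (ρ * t ^ (ρ - 1)) t :=
    fun t ht => Real.hasDerivAt_rpow_const (Or.inl ht.ne')
  have hDd : ∀ t : ℝ, 0 < t →
      HasDerivAt (fun s : ℝ => 1 + u * s ^ r) (u * (r * t ^ (r - 1))) t := by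
    intro t ht
    exact ((hrpow t ht).const_mul u).const_add 1
  have hFd : ∀ t : ℝ, 0 < t →
      HasDerivAt (fun s : ℝ => -α₂ * s ^ r / (1 + u * s ^ r)) (F' t) t := by
    intro t ht
    have hnum : HasDerivAt (fun s : ℝ => -α₂ * s ^ r) (-α₂ * (r * t ^ (r - 1))) t :=
      (hrpow t ht).const_mul (-α₂)
    have h := hnum.div (hDd t ht) (hden t ht).ne'
    refine h.congr_deriv ?_
    rw [hF'def]
    field_simp
    ring
  have hGd : ∀ t : ℝ, 0 < t →
      HasDerivAt (fun s : ℝ => σ * s ^ ρ / (1 + u * s ^ r)) (G' t) t := by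
    intro t ht
    have hnum : HasDerivAt (fun s : ℝ => σ * s ^ ρ) (σ * (ρ * t ^ (ρ - 1))) t :=
      (hrpowρ t ht).const_mul σ
    have h := hnum.div (hDd t ht) (hden t ht).ne'
    refine h.congr_deriv ?_
    have hsplit : t ^ ρ * t ^ (r - 1) = t ^ (ρ - 1) * t ^ r := by
      rw [← Real.rpow_add ht, ← Real.rpow_add ht]; ring_nf
    have hnum2 : σ * t ^ (ρ - 1) * (ρ + (ρ - r) * (u * t ^ r))
        = σ * (ρ * t ^ (ρ - 1)) * (1 + u * t ^ r) - σ * t ^ ρ * (u * (r * t ^ (r - 1))) := by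
      linear_combination (σ * u * r) * hsplit
    simp only [hG'def]
    rw [hnum2]
  -- continuity
  have hcontP : ∀ p : ℝ, ContinuousOn (fun t : ℝ => t ^ p) (Icc y x) := by
    intro p
    exact ContinuousOn.rpow_const continuousOn_id fun t htt => Or.inl (hIcc t htt).ne'
  have hcontden : ContinuousOn (fun t : ℝ => (1 + u * t ^ r) ^ 2) (Icc y x) :=
    ((continuousOn_const.add (continuousOn_const.mul (hcontP r))).pow 2)
  have hdenne : ∀ t ∈ Icc y x, (1 + u * t ^ r) ^ 2 ≠ 0 :=
    fun t htt => pow_ne_zero 2 (hden t (hIcc t htt)).ne'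
  have hcontF' : ContinuousOn F' (Icc y x) := by
    rw [hF'def]
    exact ((continuousOn_const.mul (hcontP (r - 1))).neg).div hcontden hdenne
  have hcontG' : ContinuousOn G' (Icc y x) := by
    rw [hG'def]
    exact ((continuousOn_const.mul (hcontP (ρ - 1))).mul
      (continuousOn_const.add (continuousOn_const.mul
        (continuousOn_const.mul (hcontP r))))).div hcontden hdenne
  have hintF' : IntervalIntegrable F' volume y x := by
    apply ContinuousOn.intervalIntegrable
    rwa [uIcc_of_le hyx]
  have hintG' : IntervalIntegrable G' volume y x := by
    apply ContinuousOn.intervalIntegrable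
    rwa [uIcc_of_le hyx]
  have hintG'2 : IntervalIntegrable (fun t => (G' t) ^ 2) volume y x := by
    apply ContinuousOn.intervalIntegrable
    rw [uIcc_of_le hyx]
    exact hcontG'.pow 2
  -- FTC
  have hFTCF : ∫ t in y..x, F' t =
      (-α₂ * x ^ r / (1 + u * x ^ r)) - (-α₂ * y ^ r / (1 + u * y ^ r)) := by
    exact integral_eq_sub_of_hasDerivAt
      (fun t htt => hFd t (hIcc t (by rwa [uIcc_of_le hyx] at htt))) hintF'
  have hFTCG : ∫ t in y..x, G' t =
      (σ * x ^ ρ / (1 + u * x ^ r)) - (σ * y ^ ρ / (1 + u * y ^ r)) := by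
    exact integral_eq_sub_of_hasDerivAt
      (fun t htt => hGd t (hIcc t (by rwa [uIcc_of_le hyx] at htt))) hintG'
  set I : ℝ := ∫ t in y..x, G' t with hI
  set J : ℝ := ∫ t in y..x, (G' t) ^ 2 with hJ
  -- Cauchy–Schwarz:  I^2 ≤ (x-y) * J
  have hCS : I ^ 2 ≤ (x - y) * J := by
    set lam : ℝ := I / (x - y) with hlam
    have h0 : 0 ≤ ∫ t in y..x, (G' t - lam) ^ 2 :=
      integral_nonneg hyx fun t _ => sq_nonneg _
    have hexp : (∫ t in y..x, (G' t - lam) ^ 2) = J - 2 * lam * I + (x - y) * lam ^ 2 := by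
      have e : (fun t => (G' t - lam) ^ 2)
          = fun t => ((G' t) ^ 2 - (2 * lam) * G' t + lam ^ 2) := by
        funext t; ring
      rw [e, integral_add (hintG'2.sub (hintG'.const_mul (2 * lam)))
        intervalIntegrable_const,
        integral_sub hintG'2 (hintG'.const_mul (2 * lam)), intervalIntegral.integral_const_mul,
        intervalIntegral.integral_const]
      simp only [smul_eq_mul, ← hI, ← hJ]
    have hlameq : lam * (x - y) = I := div_mul_cancel₀ I hxy.ne'
    have h1 : 0 ≤ J - 2 * lam * I + (x - y) * lam ^ 2 := hexp ▸ h0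
    have hm := mul_le_mul_of_nonneg_left h1 hxy.le
    have h2 : (x - y) * ((x - y) * lam ^ 2) = I ^ 2 := by
      rw [← hlameq]; ring
    have h3 : (x - y) * (2 * lam * I) = 2 * I ^ 2 := by
      rw [← hlameq]; ring
    nlinarith [hm, h2, h3]
  -- pointwise bound
  have hptw : ∀ t ∈ Icc y x, F' t + c * (G' t) ^ 2 ≤ L₃ := by
    intro t htt
    have ht := hIcc t htt
    simp only [hF'def, hG'def]
    exact pointwise_bound α₂ σ r ρ c L₃ u t hσ hρ hrρ hc hL hu ht (hpt t ht)
  have hint3 : IntervalIntegrable (fun t => F' t + c * (G' t) ^ 2) volume y x :=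
    hintF'.add (hintG'2.const_mul c)
  have hmono : (∫ t in y..x, (F' t + c * (G' t) ^ 2)) ≤ ∫ t in y..x, (L₃ : ℝ) :=
    integral_mono_on hyx hint3 intervalIntegrable_const hptw
  have hsplit2 : (∫ t in y..x, (F' t + c * (G' t) ^ 2)) = (∫ t in y..x, F' t) + c * J := by
    rw [integral_add hintF' (hintG'2.const_mul c), intervalIntegral.integral_const_mul]
  have hconst : (∫ t in y..x, (L₃ : ℝ)) = (x - y) * L₃ := by
    rw [intervalIntegral.integral_const]; simp [smul_eq_mul]
  have hkey : (∫ t in y..x, F' t) + c * J ≤ (x - y) * L₃ := by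
    rw [← hsplit2, ← hconst]; exact hmono
  -- assemble
  have hfinal : (x - y) * ((∫ t in y..x, F' t) + c * J) ≤ (x - y) * ((x - y) * L₃) :=
    mul_le_mul_of_nonneg_left hkey hxy.le
  have hGsq : ((σ * x ^ ρ) / (1 + u * x ^ r) - (σ * y ^ ρ) / (1 + u * y ^ r)) ^ 2 = I ^ 2 := by
    rw [hFTCG]
  have hcI : c * ((σ * x ^ ρ) / (1 + u * x ^ r) - (σ * y ^ ρ) / (1 + u * y ^ r)) ^ 2
      ≤ c * ((x - y) * J) := by
    rw [hGsq]
    exact mul_le_mul_of_nonneg_left hCS hc.le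
  have hFeq : (x - y) * ((-α₂ * x ^ r) / (1 + u * x ^ r) - (-α₂ * y ^ r) / (1 + u * y ^ r))
      = (x - y) * (∫ t in y..x, F' t) := by rw [hFTCF]
  calc (x - y) * ((-α₂ * x ^ r) / (1 + u * x ^ r) - (-α₂ * y ^ r) / (1 + u * y ^ r))
      + c * ((σ * x ^ ρ) / (1 + u * x ^ r) - (σ * y ^ ρ) / (1 + u * y ^ r)) ^ 2
      ≤ (x - y) * (∫ t in y..x, F' t) + c * ((x - y) * J) := by
        rw [hFeq]; linarith [hcI]
    _ = (x - y) * ((∫ t in y..x, F' t) + c * J) := by ring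
    _ ≤ (x - y) * ((x - y) * L₃) := hfinal
    _ = L₃ * (x - y) ^ 2 := by ring

section
variable (α₂ σ r ρ : ℝ) (hα₂ : 0 < α₂) (hσ : 0 < σ) (hr : 1 < r) (hρ : 1 < ρ) (hrρ : ρ < r)

lemma wrap (c L₃ : ℝ) (hα₂ : 0 < α₂) (hσ : 0 < σ) (hr : 1 < r) (hρ : 1 < ρ) (hrρ : ρ < r)
    (hc : 1 / 2 < c) (hL : 0 ≤ L₃)
    (hpt : ∀ t : ℝ, 0 < t →
      c * (σ ^ 2 * max ρ (r - ρ) ^ 2) * t ^ (2 * ρ - 2) ≤ α₂ * r * t ^ (r - 1) + L₃) :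
    ∃ v : ℝ, 2 < v ∧ ∃ L₃ : ℝ, 0 ≤ L₃ ∧ ∀ h : ℝ, 0 < h → ∀ x : ℝ, 0 < x → ∀ y : ℝ, 0 < y →
      (x - y) * ((-α₂ * x ^ r) / (1 + h ^ ((1 : ℝ) / 2) * x ^ r)
            - (-α₂ * y ^ r) / (1 + h ^ ((1 : ℝ) / 2) * y ^ r))
        + ((v - 1) / 2) * ((σ * x ^ ρ) / (1 + h ^ ((1 : ℝ) / 2) * x ^ r)
            - (σ * y ^ ρ) / (1 + h ^ ((1 : ℝ) / 2) * y ^ r)) ^ 2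
        ≤ L₃ * (x - y) ^ 2 := by
  have hc0 : 0 < c := by linarith
  refine ⟨2 * c + 1, by linarith, L₃, hL, ?_⟩
  intro h hh x hx y hy
  have hceq : (2 * c + 1 - 1) / 2 = c := by ring
  rw [hceq]
  set u : ℝ := h ^ ((1 : ℝ) / 2) with hu'
  have hu : 0 < u := Real.rpow_pos_of_pos hh _
  rcases le_total y x with hyx | hxy
  · exact core α₂ σ r ρ hα₂ hσ hr hρ hrρ c L₃ hc0 hL hpt u hu x y hy hyx
  · have hs := core α₂ σ r ρ hα₂ hσ hr hρ hrρ c L₃ hc0 hL hpt u hu y x hx hxy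
    set a1 : ℝ := (-α₂ * x ^ r) / (1 + u * x ^ r)
    set a2 : ℝ := (-α₂ * y ^ r) / (1 + u * y ^ r)
    set g1 : ℝ := (σ * x ^ ρ) / (1 + u * x ^ r)
    set g2 : ℝ := (σ * y ^ ρ) / (1 + u * y ^ r)
    nlinarith [hs]

end



/-- **One-sided Lipschitz condition for the tamed scheme (Example 3.2).**
For `α₂, σ > 0`, `r, ρ > 1` with `f x = -α₂ x^r`, `g x = σ x^ρ` (real powers, `x > 0`),
assuming either (a) `r + 1 > 2ρ`, or (b) `r + 1 = 2ρ` and `α₂/σ² > (1/8)(r + 2 + 1/r)`,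
there are `v > 2` and `L₃ ≥ 0` such that for every step size `h > 0` and all `x, y > 0`,
`(x-y)(f_h x - f_h y) + ((v-1)/2)(g_h x - g_h y)² ≤ L₃ (x-y)²`, where
`f_h x = f x/(1 + h^(1/2) x^r)` and `g_h x = g x/(1 + h^(1/2) x^r)`. -/
theorem stmt_7 (α₂ σ r ρ : ℝ) (hα₂ : 0 < α₂) (hσ : 0 < σ) (hr : 1 < r) (hρ : 1 < ρ)
    (hcase : r + 1 > 2 * ρ ∨ (r + 1 = 2 * ρ ∧ α₂ / σ ^ 2 > (1 / 8) * (r + 2 + 1 / r))) :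
    ∃ v : ℝ, 2 < v ∧ ∃ L₃ : ℝ, 0 ≤ L₃ ∧ ∀ h : ℝ, 0 < h → ∀ x : ℝ, 0 < x → ∀ y : ℝ, 0 < y →
      (x - y) * ((-α₂ * x ^ r) / (1 + h ^ ((1 : ℝ) / 2) * x ^ r)
            - (-α₂ * y ^ r) / (1 + h ^ ((1 : ℝ) / 2) * y ^ r))
        + ((v - 1) / 2) * ((σ * x ^ ρ) / (1 + h ^ ((1 : ℝ) / 2) * x ^ r)
            - (σ * y ^ ρ) / (1 + h ^ ((1 : ℝ) / 2) * y ^ r)) ^ 2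
        ≤ L₃ * (x - y) ^ 2 := by
  rcases hcase with ha | ⟨hb1, hb2⟩
  · -- case (a)
    have hrρ : ρ < r := by linarith
    set M : ℝ := max ρ (r - ρ) with hM
    have hM0 : 0 < M := lt_of_lt_of_le (by linarith : (0:ℝ) < ρ) (le_max_left _ _)
    set C : ℝ := σ ^ 2 * M ^ 2 with hC
    have hC0 : 0 < C := by positivity
    set B : ℝ := α₂ * r with hB
    have hB0 : 0 < B := by positivity
    set L : ℝ := C * ((C / B) ^ ((r - 1 - (2 * ρ - 2))⁻¹)) ^ (2 * ρ - 2) with hLdef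
    have hL0 : 0 ≤ L := by positivity
    apply wrap α₂ σ r ρ 1 L hα₂ hσ hr hρ hrρ (by norm_num) hL0
    intro t ht
    have := young_bound C B (2 * ρ - 2) (r - 1) hC0 hB0 (by linarith) (by linarith) t ht
    calc 1 * (σ ^ 2 * M ^ 2) * t ^ (2 * ρ - 2) = C * t ^ (2 * ρ - 2) := by rw [hC]; ring
      _ ≤ B * t ^ (r - 1) + L := this
      _ = α₂ * r * t ^ (r - 1) + L := by rw [hB]
  · -- case (b)
    have hrρ : ρ < r := by linarith
    have hr0 : 0 < r := by linarith
    set T : ℝ := α₂ * r / (σ ^ 2 * ρ ^ 2) with hT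
    have hρ2 : (0:ℝ) < σ ^ 2 * ρ ^ 2 := by positivity
    have h1 : (1 / 8) * (r + 2 + 1 / r) * σ ^ 2 < α₂ := by
      rw [gt_iff_lt, lt_div_iff₀ (by positivity)] at hb2
      linarith
    have h2 : (1 / 8) * (r + 2 + 1 / r) * r = (r + 1) ^ 2 / 8 := by
      field_simp; ring
    have h3 : ρ ^ 2 = (r + 1) ^ 2 / 4 := by
      have : ρ = (r + 1) / 2 := by linarith
      rw [this]; ring
    have hT2 : 1 / 2 < T := by
      rw [hT, lt_div_iff₀ hρ2]
      nlinarith [mul_lt_mul_of_pos_right h1 hr0]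
    set c : ℝ := (1 / 2 + T) / 2 with hc
    have hcT : c < T := by rw [hc]; linarith
    have hc2 : 1 / 2 < c := by rw [hc]; linarith
    apply wrap α₂ σ r ρ c 0 hα₂ hσ hr hρ hrρ hc2 le_rfl
    intro t ht
    have hMeq : max ρ (r - ρ) = ρ := max_eq_left (by linarith)
    have hexp : (2 * ρ - 2 : ℝ) = r - 1 := by linarith
    rw [hMeq, hexp, add_zero]
    have htpos : 0 ≤ t ^ (r - 1) := (Real.rpow_pos_of_pos ht _).le
    have hcc : c * (σ ^ 2 * ρ ^ 2) ≤ α₂ * r := by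
      have : T * (σ ^ 2 * ρ ^ 2) = α₂ * r := by
        rw [hT]; field_simp
      nlinarith [hcT, hρ2]
    exact mul_le_mul_of_nonneg_right hcc htpos
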